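/- For any finite graph H with no isolated vertices and any maximum fractional matching (w_e) of H, there exists a minimum fractional edge cover (w'_e) of H such that w_e ≤ w'_e for every edge e. -/

import Mathlib

open Finset

variable {V : Type*}

/-- Sum of edge weights over all edges containing vertex `v`. -/
def vertexDegSum [Fintype V] [DecidableEq V] (w : Sym2 V → ℝ) (v : V) : ℝ :=
  ∑ e ∈ Finset.univ.filter (fun e : Sym2 V => v ∈ e), w e

/-- Total weight of an edge weighting. -/
def edgeTotal [Fintype V] [DecidableEq V] (w : Sym2 V → ℝ) : ℝ :=
  ∑ e : Sym2 V, w e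

/-- A fractional matching of `G`. -/
def IsFracMatching [Fintype V] [DecidableEq V] (G : SimpleGraph V) (w : Sym2 V → ℝ) : Prop :=
  (∀ e, 0 ≤ w e) ∧ (∀ e, e ∉ G.edgeSet → w e = 0) ∧ ∀ v, vertexDegSum w v ≤ 1

/-- A fractional edge cover of `G`. -/
def IsFracEdgeCover [Fintype V] [DecidableEq V] (G : SimpleGraph V) (w : Sym2 V → ℝ) : Prop :=
  (∀ e, 0 ≤ w e) ∧ (∀ e, e ∉ G.edgeSet → w e = 0) ∧ ∀ v, 1 ≤ vertexDegSum w v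

/-- A maximum fractional matching. -/
def IsMaxFracMatching [Fintype V] [DecidableEq V] (G : SimpleGraph V) (w : Sym2 V → ℝ) : Prop :=
  IsFracMatching G w ∧ ∀ w', IsFracMatching G w' → edgeTotal w' ≤ edgeTotal w

/-- A minimum fractional edge cover. -/
def IsMinFracEdgeCover [Fintype V] [DecidableEq V] (G : SimpleGraph V) (w : Sym2 V → ℝ) : Prop :=
  IsFracEdgeCover G w ∧ ∀ w', IsFracEdgeCover G w' → edgeTotal w ≤ edgeTotal w'

/-- A fractional vertex cover of `G`. -/
def IsFracCover (G : SimpleGraph V) (c : V → ℝ) : Prop :=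
  (∀ v, 0 ≤ c v) ∧ ∀ u v, G.Adj u v → 1 ≤ c u + c v

/-- Total weight of a vertex weighting. -/
def coverTotal [Fintype V] (c : V → ℝ) : ℝ := ∑ v, c v

/-- A minimum fractional vertex cover. -/
def IsMinFracCover [Fintype V] (G : SimpleGraph V) (c : V → ℝ) : Prop :=
  IsFracCover G c ∧ ∀ c', IsFracCover G c' → coverTotal c ≤ coverTotal c'

/-- An edge is bad if it has weight 1 in every maximum fractional matching. -/
def IsBadEdge [Fintype V] [DecidableEq V] (G : SimpleGraph V) (e : Sym2 V) : Prop :=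
  ∀ w, IsMaxFracMatching G w → w e = 1

/-- For any maximum fractional matching there is a minimum fractional edge cover
dominating it edgewise. -/
lemma vds_eq_sum_ite [Fintype V] [DecidableEq V] (w : Sym2 V → ℝ) (v : V) :
    vertexDegSum w v = ∑ e : Sym2 V, if v ∈ e then w e else 0 :=
  Finset.sum_filter _ _

lemma card_filter_mem_edge [Fintype V] [DecidableEq V] (G : SimpleGraph V) {e : Sym2 V}
    (he : e ∈ G.edgeSet) : (Finset.univ.filter (fun v : V => v ∈ e)).card = 2 := by
  induction e with
  | _ a b =>
    have hab : a ≠ b := ((SimpleGraph.mem_edgeSet _).mp he).ne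
    have : Finset.univ.filter (fun v : V => v ∈ s(a, b)) = {a, b} := by
      ext v; simp [Sym2.mem_iff]
    rw [this, Finset.card_pair hab]

lemma sum_vds [Fintype V] [DecidableEq V] (T : Finset V) (w : Sym2 V → ℝ) :
    ∑ v ∈ T, vertexDegSum w v
      = ∑ e : Sym2 V, w e * ((T.filter (fun v => v ∈ e)).card : ℝ) := by
  calc ∑ v ∈ T, vertexDegSum w v
      = ∑ v ∈ T, ∑ e : Sym2 V, if v ∈ e then w e else 0 := by
        simp [vds_eq_sum_ite]
    _ = ∑ e : Sym2 V, ∑ v ∈ T, if v ∈ e then w e else 0 := Finset.sum_comm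
    _ = ∑ e : Sym2 V, w e * ((T.filter (fun v => v ∈ e)).card : ℝ) := by
        refine Finset.sum_congr rfl fun e _ => ?_
        rw [← Finset.sum_filter, Finset.sum_const, nsmul_eq_mul, mul_comm]

lemma sum_vds_univ [Fintype V] [DecidableEq V] (G : SimpleGraph V) (w : Sym2 V → ℝ)
    (hsupp : ∀ e, e ∉ G.edgeSet → w e = 0) :
    ∑ v : V, vertexDegSum w v = 2 * edgeTotal w := by
  rw [sum_vds, edgeTotal, Finset.mul_sum]
  refine Finset.sum_congr rfl fun e _ => ?_
  by_cases he : e ∈ G.edgeSet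
  · rw [card_filter_mem_edge G he]; push_cast; ring
  · rw [hsupp e he]; ring

lemma vds_update [Fintype V] [DecidableEq V] (m : Sym2 V → ℝ) (e : Sym2 V) (t : ℝ) (x : V) :
    vertexDegSum (Function.update m e t) x =
      vertexDegSum m x + (if x ∈ e then t - m e else 0) := by
  rw [vds_eq_sum_ite, vds_eq_sum_ite]
  have h : ∀ f : Sym2 V, (if x ∈ f then Function.update m e t f else 0)
      = (if x ∈ f then m f else 0) + (if f = e then (if x ∈ e then t - m e else 0) else 0) := by
    intro f
    rcases eq_or_ne f e with rfl | hf
    · simp only [Function.update_self, if_pos rfl]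
      split_ifs <;> ring
    · simp [Function.update_of_ne hf, hf]
  rw [Finset.sum_congr rfl fun f _ => h f, Finset.sum_add_distrib]
  congr 1
  rw [Finset.sum_ite_eq' Finset.univ e]
  simp

lemma edgeTotal_update [Fintype V] [DecidableEq V] (m : Sym2 V → ℝ) (e : Sym2 V) (t : ℝ) :
    edgeTotal (Function.update m e t) = edgeTotal m + (t - m e) := by
  unfold edgeTotal
  rw [Finset.sum_update_of_mem (Finset.mem_univ e), Finset.sdiff_singleton_eq_erase,
    ← Finset.add_sum_erase _ m (Finset.mem_univ e)]
  ring

lemma vds_sub [Fintype V] [DecidableEq V] (c m : Sym2 V → ℝ) (v : V) :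
    vertexDegSum (fun e => c e - m e) v = vertexDegSum c v - vertexDegSum m v :=
  Finset.sum_sub_distrib _ _

lemma vds_add [Fintype V] [DecidableEq V] (c m : Sym2 V → ℝ) (v : V) :
    vertexDegSum (fun e => c e + m e) v = vertexDegSum c v + vertexDegSum m v :=
  Finset.sum_add_distrib

lemma continuous_vds [Fintype V] [DecidableEq V] (v : V) :
    Continuous (fun m : Sym2 V → ℝ => vertexDegSum m v) :=
  continuous_finset_sum _ fun e _ => continuous_apply e

lemma continuous_edgeTotal [Fintype V] [DecidableEq V] :
    Continuous (fun m : Sym2 V → ℝ => edgeTotal m) :=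
  continuous_finset_sum _ fun e _ => continuous_apply e

lemma key_duality [Fintype V] [DecidableEq V] (G : SimpleGraph V)
    (w : Sym2 V → ℝ) (hw : IsMaxFracMatching G w)
    (c : Sym2 V → ℝ) (hc : IsFracEdgeCover G c) :
    (Fintype.card V : ℝ) ≤ edgeTotal w + edgeTotal c := by
  classical
  obtain ⟨hc0, hcsupp, hcv⟩ := hc
  -- the compact feasible set
  set S : Set (Sym2 V → ℝ) :=
    (Set.Icc (0 : Sym2 V → ℝ) c) ∩ (⋂ v : V, {m | vertexDegSum m v ≤ 1}) with hS
  have hScomp : IsCompact S :=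
    IsCompact.inter_right isCompact_Icc
      (isClosed_iInter fun v => isClosed_le (continuous_vds v) continuous_const)
  have hSne : (0 : Sym2 V → ℝ) ∈ S := by
    constructor
    · exact ⟨le_refl _, fun e => hc0 e⟩
    · simp only [Set.mem_iInter, Set.mem_setOf_eq]
      intro v
      have : vertexDegSum (0 : Sym2 V → ℝ) v = 0 := Finset.sum_const_zero
      rw [this]; norm_num
  obtain ⟨m, hmS, hmax⟩ := hScomp.exists_isMaxOn ⟨0, hSne⟩
    (continuous_edgeTotal.continuousOn)
  obtain ⟨⟨hm0, hmc⟩, hm1⟩ := hmS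
  have hm1' : ∀ v, vertexDegSum m v ≤ 1 := by
    intro v
    exact Set.mem_iInter.mp hm1 v
  have hm0' : ∀ e, 0 ≤ m e := fun e => hm0 e
  have hmc' : ∀ e, m e ≤ c e := fun e => hmc e
  -- m is a fractional matching of G
  have hmsupp : ∀ e, e ∉ G.edgeSet → m e = 0 := by
    intro e he
    have := hcsupp e he
    exact le_antisymm (this ▸ hmc' e) (hm0' e)
  have hmw : edgeTotal m ≤ edgeTotal w := hw.2 m ⟨hm0', hmsupp, hm1'⟩
  -- complementary slackness
  have claim : ∀ e : Sym2 V, m e < c e → ∃ x ∈ e, 1 ≤ vertexDegSum m x := by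
    intro e hme
    have hce : 0 < c e := lt_of_le_of_lt (hm0' e) hme
    have heE : e ∈ G.edgeSet := by
      by_contra h
      exact absurd (hcsupp e h) (ne_of_gt hce)
    induction e with
    | _ a b =>
      by_contra hcon
      push_neg at hcon
      have hda : vertexDegSum m a < 1 := hcon a (Sym2.mem_mk_left a b)
      have hdb : vertexDegSum m b < 1 := hcon b (Sym2.mem_mk_right a b)
      set ε : ℝ := min (c s(a,b) - m s(a,b))
        (min (1 - vertexDegSum m a) (1 - vertexDegSum m b)) with hε
      have hεpos : 0 < ε := by
        apply lt_min (by linarith) (lt_min (by linarith) (by linarith))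
      set m' : Sym2 V → ℝ := Function.update m s(a,b) (m s(a,b) + ε) with hm'
      have hm'S : m' ∈ S := by
        refine ⟨⟨fun f => ?_, fun f => ?_⟩, ?_⟩
        · show (0:Sym2 V → ℝ) f ≤ m' f
          rw [Pi.zero_apply, hm', Function.update_apply]
          split_ifs with h
          · have := hm0' s(a,b); linarith
          · exact hm0' f
        · rw [hm', Function.update_apply]
          split_ifs with h
          · subst h
            have : ε ≤ c s(a,b) - m s(a,b) := min_le_left _ _
            linarith
          · exact hmc' f
        · simp only [Set.mem_iInter, Set.mem_setOf_eq]
          intro x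
          rw [hm', vds_update]
          split_ifs with hx
          · rcases Sym2.mem_iff.mp hx with rfl | rfl
            · have h1 : ε ≤ 1 - vertexDegSum m x :=
                le_trans (min_le_right _ _) (min_le_left _ _)
              linarith
            · have h1 : ε ≤ 1 - vertexDegSum m x :=
                le_trans (min_le_right _ _) (min_le_right _ _)
              linarith
          · have := hm1' x; linarith
      have : edgeTotal m' ≤ edgeTotal m := hmax hm'S
      rw [hm', edgeTotal_update] at this
      linarith
  -- counting
  set U : Finset V := Finset.univ.filter (fun v => vertexDegSum m v < 1) with hU
  have hcount : (Fintype.card V : ℝ)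
      ≤ (∑ v : V, vertexDegSum m v) + ∑ v ∈ U, (vertexDegSum c v - vertexDegSum m v) := by
    have h1 : (Fintype.card V : ℝ) = ∑ v : V, (1 : ℝ) := by simp
    have hsplit : ∀ T : Finset V, ∀ f : V → ℝ, ∑ v ∈ Finset.univ, f v
        = ∑ v ∈ U, f v + ∑ v ∈ Finset.univ.filter (fun v => ¬ vertexDegSum m v < 1), f v := by
      intro T f
      rw [hU, Finset.sum_filter_add_sum_filter_not]
    rw [h1, hsplit U (fun _ => (1:ℝ)), hsplit U (fun v => vertexDegSum m v)]
    have hA : ∑ v ∈ U, (1:ℝ) ≤ ∑ v ∈ U, (vertexDegSum m v + (vertexDegSum c v - vertexDegSum m v)) := by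
      refine Finset.sum_le_sum fun v _ => ?_
      have := hcv v; linarith
    have hB : ∑ v ∈ Finset.univ.filter (fun v => ¬ vertexDegSum m v < 1), (1:ℝ)
        ≤ ∑ v ∈ Finset.univ.filter (fun v => ¬ vertexDegSum m v < 1), vertexDegSum m v := by
      refine Finset.sum_le_sum fun v hv => ?_
      exact not_lt.mp (Finset.mem_filter.mp hv).2
    rw [Finset.sum_add_distrib] at hA
    linarith
  have hUbound : ∑ v ∈ U, (vertexDegSum c v - vertexDegSum m v)
      ≤ edgeTotal c - edgeTotal m := by
    have h1 : ∑ v ∈ U, (vertexDegSum c v - vertexDegSum m v)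
        = ∑ e : Sym2 V, (c e - m e) * ((U.filter (fun v => v ∈ e)).card : ℝ) := by
      have : ∀ v ∈ U, vertexDegSum c v - vertexDegSum m v
          = vertexDegSum (fun e => c e - m e) v := fun v _ => (vds_sub c m v).symm
      rw [Finset.sum_congr rfl this, sum_vds]
    rw [h1]
    have h2 : edgeTotal c - edgeTotal m = ∑ e : Sym2 V, (c e - m e) := by
      rw [edgeTotal, edgeTotal, ← Finset.sum_sub_distrib]
    rw [h2]
    refine Finset.sum_le_sum fun e _ => ?_
    rcases eq_or_lt_of_le (hmc' e) with heq | hlt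
    · rw [← heq]; simp
    · obtain ⟨x, hxe, hx1⟩ := claim e hlt
      have hcard : (U.filter (fun v => v ∈ e)).card ≤ 1 := by
        have hsub : U.filter (fun v => v ∈ e) ⊆ (Finset.univ.filter (fun v : V => v ∈ e)).erase x := by
          intro v hv
          rw [Finset.mem_erase]
          obtain ⟨hvU, hve⟩ := Finset.mem_filter.mp hv
          refine ⟨?_, Finset.mem_filter.mpr ⟨Finset.mem_univ v, hve⟩⟩
          rintro rfl
          exact absurd hx1 (not_le.mpr (Finset.mem_filter.mp hvU).2)
        have hce : 0 < c e := lt_of_le_of_lt (hm0' e) hlt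
        have heE : e ∈ G.edgeSet := by
          by_contra h
          exact absurd (hcsupp e h) (ne_of_gt hce)
        have hxmem : x ∈ Finset.univ.filter (fun v : V => v ∈ e) :=
          Finset.mem_filter.mpr ⟨Finset.mem_univ x, hxe⟩
        calc (U.filter (fun v => v ∈ e)).card
            ≤ ((Finset.univ.filter (fun v : V => v ∈ e)).erase x).card := Finset.card_le_card hsub
          _ = (Finset.univ.filter (fun v : V => v ∈ e)).card - 1 := Finset.card_erase_of_mem hxmem
          _ ≤ 1 := by rw [card_filter_mem_edge G heE]
      calc (c e - m e) * ((U.filter (fun v => v ∈ e)).card : ℝ)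
          ≤ (c e - m e) * 1 := by
            apply mul_le_mul_of_nonneg_left _ (by linarith)
            exact_mod_cast hcard
        _ = c e - m e := mul_one _
  have h2m : ∑ v : V, vertexDegSum m v = 2 * edgeTotal m := sum_vds_univ G m hmsupp
  rw [h2m] at hcount
  linarith

theorem exists_min_edge_cover_dominating_max_matching
    [Fintype V] [DecidableEq V] (G : SimpleGraph V)
    (hiso : ∀ v : V, ∃ u, G.Adj v u)
    (w : Sym2 V → ℝ) (hw : IsMaxFracMatching G w) :
    ∃ w' : Sym2 V → ℝ, IsMinFracEdgeCover G w' ∧ ∀ e, w e ≤ w' e := by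
  classical
  obtain ⟨⟨hw0, hwsupp, hwle⟩, hwmax⟩ := hw
  have hev : ∀ v : V, ∃ e : Sym2 V, v ∈ e ∧ e ∈ G.edgeSet := by
    intro v
    obtain ⟨u, hu⟩ := hiso v
    exact ⟨s(v, u), Sym2.mem_mk_left v u, (SimpleGraph.mem_edgeSet G).mpr hu⟩
  choose ev hev1 hev2 using hev
  set δ : Sym2 V → ℝ :=
    fun e => ∑ v : V, if ev v = e then 1 - vertexDegSum w v else 0 with hδdef
  have hterm0 : ∀ v : V, ∀ e : Sym2 V, 0 ≤ if ev v = e then 1 - vertexDegSum w v else 0 := by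
    intro v e
    split_ifs
    · linarith [hwle v]
    · exact le_refl 0
  have hδ0 : ∀ e, 0 ≤ δ e := fun e => Finset.sum_nonneg fun v _ => hterm0 v e
  have hδsupp : ∀ e, e ∉ G.edgeSet → δ e = 0 := by
    intro e he
    refine Finset.sum_eq_zero fun v _ => ?_
    rw [if_neg]
    rintro rfl
    exact he (hev2 v)
  have hδv : ∀ v : V, 1 - vertexDegSum w v ≤ δ (ev v) := by
    intro v
    have := Finset.single_le_sum
      (f := fun v' : V => if ev v' = ev v then 1 - vertexDegSum w v' else 0)
      (fun v' _ => hterm0 v' (ev v)) (Finset.mem_univ v)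
    simp only [if_pos rfl] at this
    exact this
  have hδtot : ∑ e : Sym2 V, δ e = ∑ v : V, (1 - vertexDegSum w v) := by
    rw [hδdef]
    rw [Finset.sum_comm]
    refine Finset.sum_congr rfl fun v _ => ?_
    rw [Finset.sum_ite_eq Finset.univ (ev v) (fun _ => 1 - vertexDegSum w v)]
    simp
  set w' : Sym2 V → ℝ := fun e => w e + δ e with hw'def
  have hw'cover : IsFracEdgeCover G w' := by
    refine ⟨fun e => add_nonneg (hw0 e) (hδ0 e), fun e he => by
      rw [hw'def]; simp only []; rw [hwsupp e he, hδsupp e he, add_zero], ?_⟩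
    intro v
    have hvds : vertexDegSum w' v = vertexDegSum w v + vertexDegSum δ v := vds_add w δ v
    have hδvv : δ (ev v) ≤ vertexDegSum δ v := by
      refine Finset.single_le_sum (fun e _ => hδ0 e) ?_
      exact Finset.mem_filter.mpr ⟨Finset.mem_univ _, hev1 v⟩
    have := hδv v
    rw [hvds]
    linarith
  have hw'tot : edgeTotal w' = (Fintype.card V : ℝ) - edgeTotal w := by
    have h1 : edgeTotal w' = edgeTotal w + ∑ e : Sym2 V, δ e := by
      rw [edgeTotal, edgeTotal, ← Finset.sum_add_distrib]
    have h2 : ∑ v : V, (1 - vertexDegSum w v)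
        = (Fintype.card V : ℝ) - 2 * edgeTotal w := by
      rw [Finset.sum_sub_distrib, sum_vds_univ G w hwsupp]
      simp
    rw [h1, hδtot, h2]
    ring
  refine ⟨w', ⟨hw'cover, ?_⟩, fun e => le_add_of_nonneg_right (hδ0 e)⟩
  intro c hc
  have := key_duality G w ⟨⟨hw0, hwsupp, hwle⟩, hwmax⟩ c hc
  rw [hw'tot]
  linarith
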